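/- Let (M,d) be a metric space, γ : [0,1] → M a Lipschitz curve, and suppose the metric derivative |γ̇|(t) := lim_{s→0} d(γ(t+s),γ(t))/|s| exists for almost every t. Then the length of γ, defined as L_d(γ) := sup over partitions 0 ≤ t_1 < ... < t_k ≤ 1 of Σ d(γ(t_{i+1}),γ(t_i)), equals ∫₀¹ |γ̇|(t) dt. -/

import Mathlib

open MeasureTheory Filter Topology

open Set
open scoped ENNReal NNReal

section Aux
lemma lip_sub_mono {f : ℝ → ℝ} {K : NNReal} (hl : LipschitzWith K f) :
    Monotone (fun x => (K : ℝ) * x - f x) := by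
  intro x y hxy
  have h1 : f y - f x ≤ (K : ℝ) * (y - x) := by
    calc f y - f x ≤ |f y - f x| := le_abs_self _
    _ = dist (f y) (f x) := (Real.dist_eq _ _).symm
    _ ≤ (K : ℝ) * dist y x := hl.dist_le_mul _ _
    _ = (K : ℝ) * (y - x) := by rw [Real.dist_eq, abs_of_nonneg (sub_nonneg.2 hxy)]
  simp only
  linarith

lemma ftc_mono_lip {f : ℝ → ℝ} {K : NNReal} (hm : Monotone f) (hl : LipschitzWith K f)
    {a b : ℝ} (hab : a ≤ b) :
    f b - f a = ∫ t in Set.Ioc a b, deriv f t := by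
  have hcont : Continuous f := hl.continuous
  set F : StieltjesFunction ℝ := ⟨f, hm, fun x => hcont.continuousWithinAt⟩ with hF
  have hm2 : Monotone (fun x => (K : ℝ) * x - f x) := lip_sub_mono hl
  set G : StieltjesFunction ℝ := ⟨fun x => (K : ℝ) * x - f x, hm2,
    fun x => ((continuous_const.mul continuous_id).sub hcont).continuousWithinAt⟩ with hG
  have hFG : F.measure + G.measure = ((K : ℝ≥0∞) • volume) := by
    refine Measure.ext_of_Ioc' _ _ (fun x y hxy => ?_) (fun x y hxy => ?_)
    · simp only [Measure.coe_add, Pi.add_apply, StieltjesFunction.measure_Ioc]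
      exact ENNReal.add_ne_top.2 ⟨ENNReal.ofReal_ne_top, ENNReal.ofReal_ne_top⟩
    simp only [Measure.coe_add, Pi.add_apply, StieltjesFunction.measure_Ioc,
      Measure.smul_apply, Real.volume_Ioc, smul_eq_mul]
    show ENNReal.ofReal (f y - f x) + ENNReal.ofReal (((K:ℝ) * y - f y) - ((K:ℝ) * x - f x)) = _
    rw [← ENNReal.ofReal_add (sub_nonneg.2 (hm hxy.le)) (sub_nonneg.2 (hm2 hxy.le)),
      ← ENNReal.ofReal_coe_nnreal, ← ENNReal.ofReal_mul K.coe_nonneg]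
    ring_nf
  have hle : F.measure ≤ (K : ℝ≥0∞) • volume := by
    rw [← hFG]; exact Measure.le_add_right le_rfl
  have hac : F.measure ≪ volume := by
    refine Measure.absolutelyContinuous_of_le_smul (c := (K : ℝ≥0∞)) ?_
    exact hle
  have hwd : volume.withDensity (F.measure.rnDeriv volume) = F.measure :=
    Measure.withDensity_rnDeriv_eq _ _ hac
  have hlt : ∀ᵐ x, F.measure.rnDeriv volume x < ∞ := Measure.rnDeriv_lt_top _ _
  have hdF : ∀ᵐ x, HasDerivAt f ((F.measure.rnDeriv volume x).toReal) x :=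
    F.ae_hasDerivAt
  have hda : ∀ᵐ x, deriv f x = (F.measure.rnDeriv volume x).toReal := by
    filter_upwards [hdF] with x hx using hx.deriv
  have h1 : ∫⁻ t in Set.Ioc a b, F.measure.rnDeriv volume t = ENNReal.ofReal (f b - f a) := by
    rw [← withDensity_apply _ measurableSet_Ioc, hwd, F.measure_Ioc]
  have h2 : ∫ t in Set.Ioc a b, deriv f t
      = ∫ t in Set.Ioc a b, (F.measure.rnDeriv volume t).toReal := by
    apply integral_congr_ae
    exact ae_restrict_of_ae hda
  rw [h2, integral_toReal (F.measure.measurable_rnDeriv volume).aemeasurable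
    (ae_restrict_of_ae hlt), h1, ENNReal.toReal_ofReal (sub_nonneg.2 (hm hab))]

lemma deriv_bdd_of_lip {f : ℝ → ℝ} {K : NNReal} (hl : LipschitzWith K f) (x : ℝ) :
    |deriv f x| ≤ (K : ℝ) := by
  have := norm_deriv_le_of_lipschitz (𝕜 := ℝ) (hlip := hl) (x₀ := x)
  simpa using this

lemma integrable_deriv_of_lip {f : ℝ → ℝ} {K : NNReal} (hl : LipschitzWith K f) {a b : ℝ} :
    IntegrableOn (deriv f) (Set.Ioc a b) := by
  haveI : IsFiniteMeasure (volume.restrict (Set.Ioc a b)) := by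
    constructor
    rw [Measure.restrict_apply_univ, Real.volume_Ioc]
    exact ENNReal.ofReal_lt_top
  refine Integrable.mono' (integrable_const (K : ℝ)) (measurable_deriv f).aestronglyMeasurable ?_
  exact Eventually.of_forall fun x => by simpa using deriv_bdd_of_lip hl x

lemma ftc_lip {f : ℝ → ℝ} {K : NNReal} (hl : LipschitzWith K f)
    {a b : ℝ} (hab : a ≤ b) :
    f b - f a = ∫ t in Set.Ioc a b, deriv f t := by
  set g : ℝ → ℝ := fun x => (K : ℝ) * x - f x with hg
  have hgm : Monotone g := lip_sub_mono hl
  have hglip : LipschitzWith (K + K) g := by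
    have h1 : LipschitzWith K (fun x : ℝ => (K : ℝ) * x) := by
      apply LipschitzWith.of_dist_le_mul
      intro x y
      rw [Real.dist_eq, Real.dist_eq, ← mul_sub, abs_mul, abs_of_nonneg (K.coe_nonneg)]
    exact h1.sub hl
  have hftcg := ftc_mono_lip hgm hglip hab
  have hae : ∀ᵐ x : ℝ, DifferentiableAt ℝ f x := hl.ae_differentiableAt_real
  have hderiv : ∀ᵐ x : ℝ, deriv g x = (K : ℝ) - deriv f x := by
    filter_upwards [hae] with x hx
    have : HasDerivAt g ((K : ℝ) - deriv f x) x := by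
      exact (((hasDerivAt_id x).const_mul (K : ℝ)).sub hx.hasDerivAt).congr_deriv (by simp)
    exact this.deriv
  have h2 : ∫ t in Set.Ioc a b, deriv g t = ∫ t in Set.Ioc a b, ((K : ℝ) - deriv f t) := by
    exact integral_congr_ae (ae_restrict_of_ae hderiv)
  have h3 : ∫ t in Set.Ioc a b, ((K : ℝ) - deriv f t)
      = (K : ℝ) * (b - a) - ∫ t in Set.Ioc a b, deriv f t := by
    rw [integral_sub (integrable_const _) (integrable_deriv_of_lip hl)]
    congr 1
    simp [Real.volume_Ioc, ENNReal.toReal_ofReal (sub_nonneg.2 hab), mul_comm, max_eq_left (sub_nonneg.2 hab)]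
  have hgba : g b - g a = (K : ℝ) * (b - a) - (f b - f a) := by simp only [hg]; ring
  rw [hgba, h2, h3] at hftcg
  linarith

variable {M : Type*} [MetricSpace M]

lemma evar_Icc_le {γ' : ℝ → M} {K : NNReal} (hγ' : LipschitzWith K γ') {a b : ℝ} (hab : a ≤ b) :
    eVariationOn γ' (Icc a b) ≤ ENNReal.ofReal ((K : ℝ) * (b - a)) := by
  have h1 : eVariationOn (γ' ∘ id) (Icc a b) ≤ (K : ℝ≥0∞) * eVariationOn id (Icc a b) :=
    (LipschitzWith.lipschitzOnWith hγ' (s := univ)).comp_eVariationOn_le (mapsTo_univ _ _)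
  have h2 : eVariationOn (id : ℝ → ℝ) (Icc a b) ≤ ENNReal.ofReal (b - a) := by
    have := MonotoneOn.eVariationOn_le (f := (id : ℝ → ℝ)) (s := Icc a b)
      (monotoneOn_id) (left_mem_Icc.2 hab) (right_mem_Icc.2 hab)
    simpa using this
  calc eVariationOn γ' (Icc a b) = eVariationOn (γ' ∘ id) (Icc a b) := rfl
  _ ≤ (K : ℝ≥0∞) * eVariationOn id (Icc a b) := h1
  _ ≤ (K : ℝ≥0∞) * ENNReal.ofReal (b - a) := by gcongr
  _ = ENNReal.ofReal ((K : ℝ) * (b - a)) := by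
      rw [ENNReal.ofReal_mul K.coe_nonneg, ENNReal.ofReal_coe_nnreal]

lemma evar_Icc_ne_top {γ' : ℝ → M} {K : NNReal} (hγ' : LipschitzWith K γ') (a b : ℝ) :
    eVariationOn γ' (Icc a b) ≠ ⊤ := by
  rcases le_total a b with hab | hab
  · exact ((evar_Icc_le hγ' hab).trans_lt ENNReal.ofReal_lt_top).ne
  · rcases eq_or_lt_of_le hab with h | h
    · subst h
      exact ((evar_Icc_le hγ' le_rfl).trans_lt ENNReal.ofReal_lt_top).ne
    · rw [Icc_eq_empty (not_le.2 h)]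
      simp [eVariationOn.subsingleton γ' subsingleton_empty]

noncomputable def clamp01 (t : ℝ) : ℝ := max 0 (min 1 t)

lemma clamp01_mem (t : ℝ) : clamp01 t ∈ Icc (0:ℝ) 1 :=
  ⟨le_max_left _ _, max_le (by norm_num) (min_le_left _ _)⟩

lemma clamp01_mono : Monotone clamp01 := fun x y hxy =>
  max_le_max le_rfl (min_le_min le_rfl hxy)

lemma clamp01_of_mem {t : ℝ} (ht : t ∈ Icc (0:ℝ) 1) : clamp01 t = t := by
  rw [clamp01, min_eq_right ht.2, max_eq_right ht.1]

lemma clamp01_lip : LipschitzWith 1 clamp01 := by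
  have h1 : LipschitzWith 1 (fun t : ℝ => min 1 t) :=
    LipschitzWith.id.const_min 1
  have h2 : LipschitzWith 1 (fun t : ℝ => max 0 t) :=
    LipschitzWith.id.const_max 0
  exact (by simpa using h2.comp h1 : LipschitzWith 1 ((fun t : ℝ => max 0 t) ∘ fun t : ℝ => min 1 t))

noncomputable def Vfun (γ' : ℝ → M) (t : ℝ) : ℝ :=
  (eVariationOn γ' (Icc 0 (clamp01 t))).toReal

lemma V_sub {γ' : ℝ → M} {K : NNReal} (hγ' : LipschitzWith K γ') {s t : ℝ} (hst : s ≤ t) :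
    Vfun γ' t - Vfun γ' s = (eVariationOn γ' (Icc (clamp01 s) (clamp01 t))).toReal := by
  have hsplit := eVariationOn.Icc_add_Icc γ' (s := univ) (clamp01_mem s).1
    (clamp01_mono hst) (mem_univ _)
  simp only [univ_inter] at hsplit
  rw [Vfun, Vfun, ← hsplit, ENNReal.toReal_add (evar_Icc_ne_top hγ' _ _) (evar_Icc_ne_top hγ' _ _)]
  ring

lemma V_mono {γ' : ℝ → M} {K : NNReal} (hγ' : LipschitzWith K γ') : Monotone (Vfun γ') := by
  intro s t hst
  have := V_sub hγ' hst
  have h2 : (0:ℝ) ≤ (eVariationOn γ' (Icc (clamp01 s) (clamp01 t))).toReal := ENNReal.toReal_nonneg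
  linarith

lemma V_lip {γ' : ℝ → M} {K : NNReal} (hγ' : LipschitzWith K γ') : LipschitzWith K (Vfun γ') := by
  apply LipschitzWith.of_dist_le_mul
  intro x y
  wlog hxy : y ≤ x generalizing x y
  · rw [dist_comm, dist_comm x y]; exact this _ _ (le_of_not_ge hxy)
  rw [Real.dist_eq, Real.dist_eq, abs_of_nonneg (sub_nonneg.2 (V_mono hγ' hxy)),
    abs_of_nonneg (sub_nonneg.2 hxy), V_sub hγ' hxy]
  have h1 := evar_Icc_le hγ' (clamp01_mono hxy)
  have h2 : (eVariationOn γ' (Icc (clamp01 y) (clamp01 x))).toReal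
      ≤ (K : ℝ) * (clamp01 x - clamp01 y) := by
    refine ENNReal.toReal_le_of_le_ofReal ?_ h1
    have h0 : (0:ℝ) ≤ clamp01 x - clamp01 y := sub_nonneg.2 (clamp01_mono hxy)
    positivity
  refine h2.trans ?_
  have h3 : clamp01 x - clamp01 y ≤ x - y := by
    have := clamp01_lip.dist_le_mul y x
    rw [Real.dist_eq, Real.dist_eq] at this
    simp only [NNReal.coe_one, one_mul] at this
    rw [abs_sub_comm, abs_sub_comm y x, abs_of_nonneg (sub_nonneg.2 hxy)] at this
    exact (abs_le.1 this).2
  nlinarith [K.coe_nonneg]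

lemma dist_le_V {γ' : ℝ → M} {K : NNReal} (hγ' : LipschitzWith K γ')
    (hc : ∀ x, γ' (clamp01 x) = γ' x) {a b : ℝ} (hab : a ≤ b) :
    dist (γ' b) (γ' a) ≤ Vfun γ' b - Vfun γ' a := by
  rw [V_sub hγ' hab]
  have h1 : edist (γ' b) (γ' a) ≤ eVariationOn γ' (Icc (clamp01 a) (clamp01 b)) := by
    rw [← hc a, ← hc b]
    exact eVariationOn.edist_le γ'
      (right_mem_Icc.2 (clamp01_mono hab)) (left_mem_Icc.2 (clamp01_mono hab))
  rw [dist_edist]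
  exact ENNReal.toReal_mono (evar_Icc_ne_top hγ' _ _) h1

lemma tendsto_add_nhdsNE (t : ℝ) : Tendsto (fun s => t + s) (𝓝[≠] (0:ℝ)) (𝓝[≠] t) := by
  apply tendsto_nhdsWithin_of_tendsto_nhds_of_eventually_within
  · have h : Tendsto (fun s : ℝ => t + s) (𝓝 0) (𝓝 t) := by
      have hc : Continuous (fun s : ℝ => t + s) := continuous_const.add continuous_id
      simpa using hc.tendsto (0:ℝ)
    exact h.mono_left nhdsWithin_le_nhds
  · filter_upwards [self_mem_nhdsWithin] with s hs
    simp only [mem_compl_iff, mem_singleton_iff] at hs ⊢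
    intro h
    exact hs (by linarith)

lemma slope_tendsto {f : ℝ → ℝ} {t d : ℝ} (h : HasDerivAt f d t) :
    Tendsto (fun s => (f (t + s) - f t) / s) (𝓝[≠] (0:ℝ)) (𝓝 d) := by
  have h1 := (hasDerivAt_iff_tendsto_slope.1 h).comp (tendsto_add_nhdsNE t)
  have h2 : (slope f t ∘ fun s => t + s) = fun s => (f (t + s) - f t) / s := by
    funext s
    simp [Function.comp, slope_def_field]
  rwa [h2] at h1

lemma abs_slope_tendsto {f : ℝ → ℝ} {t d : ℝ} (h : HasDerivAt f d t) :
    Tendsto (fun s => |f (t + s) - f t| / |s|) (𝓝[≠] (0:ℝ)) (𝓝 |d|) := by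
  have := (slope_tendsto h).abs
  simpa [abs_div] using this
end Aux

theorem stmt_7 {M : Type*} [MetricSpace M] (γ : ℝ → M) (K : NNReal)
    (hγ : LipschitzOnWith K γ (Set.Icc 0 1)) (v : ℝ → ℝ)
    (hv : ∀ᵐ t ∂(volume.restrict (Set.Icc (0:ℝ) 1)),
      Tendsto (fun s => dist (γ (t + s)) (γ t) / |s|) (𝓝[≠] (0:ℝ)) (𝓝 (v t))) :
    (eVariationOn γ (Set.Icc 0 1)).toReal = ∫ t in Set.Icc (0:ℝ) 1, v t := by
  set γ' : ℝ → M := fun t => γ (Set.projIcc (0:ℝ) 1 zero_le_one t) with hγ'def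
  have hproj : ∀ x, γ' (clamp01 x) = γ' x := by
    intro x
    have h : Set.projIcc (0:ℝ) 1 zero_le_one (clamp01 x) = Set.projIcc (0:ℝ) 1 zero_le_one x := by
      apply Subtype.ext
      rw [Set.coe_projIcc, Set.coe_projIcc]
      exact clamp01_of_mem (clamp01_mem x)
    simp only [hγ'def, h]
  have hγ'lip : LipschitzWith K γ' := by
    apply LipschitzWith.of_dist_le_mul
    intro x y
    have h1 := (lipschitzOnWith_iff_dist_le_mul.1 hγ) _
      (Set.projIcc (0:ℝ) 1 zero_le_one x).2 _ (Set.projIcc (0:ℝ) 1 zero_le_one y).2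
    refine h1.trans ?_
    have h2 : dist ((Set.projIcc (0:ℝ) 1 zero_le_one x : ℝ)) ((Set.projIcc (0:ℝ) 1 zero_le_one y : ℝ))
        ≤ dist x y := by
      have h3 := (LipschitzWith.projIcc (a := (0:ℝ)) (b := 1) zero_le_one).dist_le_mul x y
      rw [Subtype.dist_eq] at h3
      simpa using h3
    nlinarith [K.coe_nonneg, dist_nonneg (x := x) (y := y)]
  have hEq : EqOn γ γ' (Icc 0 1) := by
    intro t ht
    simp only [hγ'def]
    rw [Set.projIcc_of_mem _ ht]
  set V : ℝ → ℝ := Vfun γ' with hVdef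
  have hV0 : V 0 = 0 := by
    rw [hVdef, Vfun, clamp01_of_mem (left_mem_Icc.2 zero_le_one), Icc_self]
    rw [eVariationOn.subsingleton γ' subsingleton_singleton]
    simp
  have hV1 : (eVariationOn γ (Icc (0:ℝ) 1)).toReal = V 1 := by
    rw [eVariationOn.eq_of_eqOn hEq, hVdef, Vfun, clamp01_of_mem (right_mem_Icc.2 zero_le_one)]
  have hftc : V 1 - V 0 = ∫ t in Ioc (0:ℝ) 1, deriv V t := ftc_lip (V_lip hγ'lip) zero_le_one
  have hP : ∀ᵐ t ∂(volume.restrict (Icc (0:ℝ) 1)), t ∈ Ioo (0:ℝ) 1 ∧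
      Tendsto (fun s => dist (γ' (t + s)) (γ' t) / |s|) (𝓝[≠] (0:ℝ)) (𝓝 (v t)) := by
    have h0 : ∀ᵐ t : ℝ, t ≠ 0 := by
      rw [ae_iff]
      have h : {a : ℝ | ¬ a ≠ 0} = {0} := by ext t; simp
      rw [h]
      exact measure_singleton _
    have h1 : ∀ᵐ t : ℝ, t ≠ 1 := by
      rw [ae_iff]
      have h : {a : ℝ | ¬ a ≠ 1} = {1} := by ext t; simp
      rw [h]
      exact measure_singleton _
    filter_upwards [hv, ae_restrict_mem measurableSet_Icc, ae_restrict_of_ae h0,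
      ae_restrict_of_ae h1] with t htv htm ht0 ht1
    have htIoo : t ∈ Ioo (0:ℝ) 1 :=
      ⟨lt_of_le_of_ne htm.1 (Ne.symm ht0), lt_of_le_of_ne htm.2 ht1⟩
    refine ⟨htIoo, ?_⟩
    refine Tendsto.congr' ?_ htv
    have hδ : 0 < min t (1 - t) := lt_min htIoo.1 (by linarith [htIoo.2])
    have hball : ∀ᶠ s : ℝ in 𝓝 (0:ℝ), |s| < min t (1 - t) := by
      filter_upwards [Metric.ball_mem_nhds (0:ℝ) hδ] with s hs
      simpa [Real.dist_eq] using hs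
    refine eventually_nhdsWithin_of_eventually_nhds ?_
    filter_upwards [hball] with s hs
    have habs := abs_lt.1 hs
    have hmem : t + s ∈ Icc (0:ℝ) 1 := by
      constructor
      · linarith [habs.1, min_le_left t (1-t)]
      · linarith [habs.2, min_le_right t (1-t)]
    rw [hEq hmem, hEq htm]
  have hmeas : AEMeasurable v (volume.restrict (Icc (0:ℝ) 1)) := by
    have hFc : ∀ n : ℕ, Continuous (fun t => dist (γ' (t + 1/((n:ℝ)+1))) (γ' t) / |1/((n:ℝ)+1)|) :=
      fun n => ((hγ'lip.continuous.comp (continuous_id.add continuous_const)).dist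
        hγ'lip.continuous).div_const _
    have hseq : Tendsto (fun n : ℕ => 1/((n:ℝ)+1)) atTop (𝓝[≠] (0:ℝ)) := by
      apply tendsto_nhdsWithin_of_tendsto_nhds_of_eventually_within
      · exact tendsto_one_div_add_atTop_nhds_zero_nat
      · refine Eventually.of_forall fun n => ?_
        simp only [mem_compl_iff, mem_singleton_iff]
        positivity
    refine aemeasurable_of_tendsto_metrizable_ae'
      (fun n => (hFc n).aemeasurable.restrict) ?_
    filter_upwards [hP] with t ht
    exact ht.2.comp hseq
  have hbound : ∀ᵐ t ∂(volume.restrict (Icc (0:ℝ) 1)), 0 ≤ v t ∧ v t ≤ (K:ℝ) := by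
    filter_upwards [hP] with t ht
    constructor
    · refine ge_of_tendsto' ht.2 fun s => ?_
      positivity
    · refine le_of_tendsto' ht.2 fun s => ?_
      rcases eq_or_ne s 0 with rfl | hs
      · simp
      · rw [div_le_iff₀ (abs_pos.2 hs)]
        have h2 := hγ'lip.dist_le_mul (t + s) t
        rwa [Real.dist_eq, add_sub_cancel_left] at h2
  have hint : IntegrableOn v (Icc (0:ℝ) 1) := by
    haveI : IsFiniteMeasure (volume.restrict (Icc (0:ℝ) 1)) := by
      constructor
      rw [Measure.restrict_apply_univ, Real.volume_Icc]
      exact ENNReal.ofReal_lt_top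
    refine Integrable.mono' (integrable_const (K:ℝ)) hmeas.aestronglyMeasurable ?_
    filter_upwards [hbound] with t ht
    rw [Real.norm_eq_abs, abs_of_nonneg ht.1]
    exact ht.2
  have hle1 : ∀ᵐ t ∂(volume.restrict (Icc (0:ℝ) 1)), v t ≤ deriv V t := by
    have hdiff : ∀ᵐ t : ℝ, DifferentiableAt ℝ V t := (V_lip hγ'lip).ae_differentiableAt_real
    filter_upwards [hP, ae_restrict_of_ae hdiff] with t ht hd
    have hder : HasDerivAt V (deriv V t) t := hd.hasDerivAt
    have hA : Tendsto (fun s => |V (t + s) - V t| / |s|) (𝓝[≠] (0:ℝ)) (𝓝 |deriv V t|) :=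
      abs_slope_tendsto hder
    have hcmp : ∀ s : ℝ, dist (γ' (t + s)) (γ' t) / |s| ≤ |V (t + s) - V t| / |s| := by
      intro s
      rcases eq_or_ne s 0 with rfl | hs
      · simp
      · rw [div_le_div_iff_of_pos_right (abs_pos.2 hs)]
        rcases le_total 0 s with hs' | hs'
        · refine le_trans (dist_le_V hγ'lip hproj (by linarith : t ≤ t + s)) (le_abs_self _)
        · rw [dist_comm]
          refine le_trans (dist_le_V hγ'lip hproj (by linarith : t + s ≤ t)) ?_
          calc V t - V (t + s) = -(V (t + s) - V t) := by ring
          _ ≤ |V (t + s) - V t| := neg_le_abs _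
    have hvle : v t ≤ |deriv V t| := le_of_tendsto_of_tendsto' ht.2 hA hcmp
    have hpos : 0 ≤ deriv V t := by
      have hBP : Tendsto (fun s => (V (t + s) - V t) / s) (𝓝[>] (0:ℝ)) (𝓝 (deriv V t)) :=
        (slope_tendsto hder).mono_left (nhdsWithin_mono _ (fun s hs => ne_of_gt hs))
      refine ge_of_tendsto hBP ?_
      filter_upwards [self_mem_nhdsWithin] with s hs
      exact div_nonneg (sub_nonneg.2 (V_mono hγ'lip (by linarith [mem_Ioi.1 hs]))) (le_of_lt hs)
    rwa [abs_of_nonneg hpos] at hvle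
  have hkey : ∀ a b : ℝ, a ∈ Icc (0:ℝ) 1 → b ∈ Icc (0:ℝ) 1 → a ≤ b →
      dist (γ' b) (γ' a) ≤ ∫ t in Ioc a b, v t := by
    intro a b ha hb hab
    set g : ℝ → ℝ := fun u => dist (γ' u) (γ' a) with hgdef
    have hg : LipschitzWith K g := by
      apply LipschitzWith.of_dist_le_mul
      intro x y
      rw [Real.dist_eq]
      exact le_trans (abs_dist_sub_le _ _ _) (hγ'lip.dist_le_mul x y)
    have hsub : Ioc a b ⊆ Icc (0:ℝ) 1 :=
      fun x hx => ⟨le_trans ha.1 hx.1.le, le_trans hx.2 hb.2⟩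
    have hRle : volume.restrict (Ioc a b) ≤ volume.restrict (Icc (0:ℝ) 1) :=
      Measure.restrict_mono hsub le_rfl
    have hdiffg : ∀ᵐ t : ℝ, DifferentiableAt ℝ g t := hg.ae_differentiableAt_real
    have hmono : ∫ t in Ioc a b, deriv g t ≤ ∫ t in Ioc a b, v t := by
      refine integral_mono_ae (integrable_deriv_of_lip hg) (hint.mono_set hsub) ?_
      filter_upwards [(ae_mono hRle) hP, ae_restrict_of_ae hdiffg] with t ht hd
      have hA : Tendsto (fun s => |g (t + s) - g t| / |s|) (𝓝[≠] (0:ℝ)) (𝓝 |deriv g t|) :=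
        abs_slope_tendsto hd.hasDerivAt
      have hcmp : ∀ s : ℝ, |g (t + s) - g t| / |s| ≤ dist (γ' (t + s)) (γ' t) / |s| := by
        intro s
        rcases eq_or_ne s 0 with rfl | hs
        · simp
        · rw [div_le_div_iff_of_pos_right (abs_pos.2 hs)]
          exact abs_dist_sub_le _ _ _
      have h1 : |deriv g t| ≤ v t := le_of_tendsto_of_tendsto' hA ht.2 hcmp
      exact le_trans (le_abs_self _) h1
    have hftcg := ftc_lip hg hab
    have hga : g a = 0 := by simp [hgdef]
    have hgb : g b = dist (γ' b) (γ' a) := rfl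
    rw [hga, hgb, sub_zero] at hftcg
    rw [hftcg]
    exact hmono
  have hup : eVariationOn γ' (Icc (0:ℝ) 1) ≤ ENNReal.ofReal (∫ t in Ioc (0:ℝ) 1, v t) := by
    have hvnn : ∀ c d : ℝ, Ioc c d ⊆ Icc (0:ℝ) 1 → 0 ≤ ∫ t in Ioc c d, v t := by
      intro c d hcd
      refine integral_nonneg_of_ae ?_
      filter_upwards [(ae_mono (Measure.restrict_mono hcd le_rfl)) hbound] with t ht using ht.1
    rw [eVariationOn]
    apply iSup_le
    rintro ⟨n, u, hu, us⟩
    have key : ∀ m : ℕ, (∑ i ∈ Finset.range m, edist (γ' (u (i+1))) (γ' (u i)))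
        ≤ ENNReal.ofReal (∫ t in Ioc (u 0) (u m), v t) := by
      intro m
      induction m with
      | zero => simp
      | succ m ih =>
        rw [Finset.sum_range_succ]
        have hsub1 : Ioc (u 0) (u m) ⊆ Icc (0:ℝ) 1 :=
          fun x hx => ⟨le_trans (us 0).1 hx.1.le, le_trans hx.2 (us m).2⟩
        have hsub2 : Ioc (u m) (u (m+1)) ⊆ Icc (0:ℝ) 1 :=
          fun x hx => ⟨le_trans (us m).1 hx.1.le, le_trans hx.2 (us (m+1)).2⟩
        have h1 : edist (γ' (u (m+1))) (γ' (u m))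
            ≤ ENNReal.ofReal (∫ t in Ioc (u m) (u (m+1)), v t) := by
          rw [edist_dist]
          exact ENNReal.ofReal_le_ofReal
            (hkey (u m) (u (m+1)) (us m) (us (m+1)) (hu (Nat.le_succ m)))
        refine le_trans (add_le_add ih h1) ?_
        rw [← ENNReal.ofReal_add (hvnn _ _ hsub1) (hvnn _ _ hsub2)]
        apply ENNReal.ofReal_le_ofReal
        rw [← setIntegral_union (Ioc_disjoint_Ioc_of_le le_rfl) measurableSet_Ioc
          (hint.mono_set hsub1) (hint.mono_set hsub2),
          Ioc_union_Ioc_eq_Ioc (hu (Nat.zero_le m)) (hu (Nat.le_succ m))]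
    refine le_trans (key n) ?_
    apply ENNReal.ofReal_le_ofReal
    refine setIntegral_mono_set (hint.mono_set Ioc_subset_Icc_self) ?_ ?_
    · filter_upwards [(ae_mono (Measure.restrict_mono Ioc_subset_Icc_self le_rfl)) hbound]
        with t ht using ht.1
    · refine HasSubset.Subset.eventuallyLE ?_
      intro x hx
      exact ⟨lt_of_le_of_lt (us 0).1 hx.1, le_trans hx.2 (us n).2⟩
  -- assembly
  have hIccIoc : ∫ t in Icc (0:ℝ) 1, v t = ∫ t in Ioc (0:ℝ) 1, v t :=
    integral_Icc_eq_integral_Ioc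
  have hR : volume.restrict (Ioc (0:ℝ) 1) ≤ volume.restrict (Icc (0:ℝ) 1) :=
    Measure.restrict_mono Ioc_subset_Icc_self le_rfl
  have hvnonneg : 0 ≤ᵐ[volume.restrict (Ioc (0:ℝ) 1)] v := by
    filter_upwards [(ae_mono hR) hbound] with t ht using ht.1
  have hintIoc : IntegrableOn v (Ioc (0:ℝ) 1) := hint.mono_set Ioc_subset_Icc_self
  have hup' : V 1 ≤ ∫ t in Ioc (0:ℝ) 1, v t := by
    have h1 : V 1 = (eVariationOn γ' (Icc (0:ℝ) 1)).toReal := by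
      rw [hVdef, Vfun, clamp01_of_mem (right_mem_Icc.2 zero_le_one)]
    rw [h1]
    refine ENNReal.toReal_le_of_le_ofReal ?_ hup
    exact integral_nonneg_of_ae hvnonneg
  have hdown : ∫ t in Ioc (0:ℝ) 1, v t ≤ V 1 := by
    have h2 : ∫ t in Ioc (0:ℝ) 1, v t ≤ ∫ t in Ioc (0:ℝ) 1, deriv V t := by
      refine integral_mono_ae (hintIoc) (integrable_deriv_of_lip (V_lip hγ'lip)) ?_
      exact (ae_mono hR) hle1
    rw [← hftc] at h2
    linarith [h2, hV0]
  rw [hV1, hIccIoc]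
  linarith
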